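/- arXiv:2510.08426 — 8 statements merged into one kernel-verified Lean document; each statement's English description precedes it below -/
import Mathlib

section
/- Let G be a finite group, H ≤ G and N ⊴ G. If H satisfies the Π-property in G, then HN/N satisfies the Π-property in G/N. -/
/-- `H` satisfies the Π-property in `G`: for every chief factor `L/K` of `G`,
`|G/K : N_{G/K}(HK/K ∩ L/K)|` is a `π(HK/K ∩ L/K)`-number. -/
def SatisfiesPiProperty {G : Type*} [Group G] (H : Subgroup G) : Prop :=
  ∀ (K L : Subgroup G) (hK : K.Normal) (_ : L.Normal) (_ : K < L)
    (_ : ∀ M : Subgroup G, M.Normal → K ≤ M → M ≤ L → M = K ∨ M = L),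
    haveI := hK
    ∀ q : ℕ, q.Prime →
      q ∣ (Subgroup.normalizer ((H.map (QuotientGroup.mk' K) ⊓ L.map (QuotientGroup.mk' K) : Subgroup (G ⧸ K)) : Set (G ⧸ K))).index →
      q ∣ Nat.card ↥(H.map (QuotientGroup.mk' K) ⊓ L.map (QuotientGroup.mk' K))

/-- `H` satisfies the `IC`-Π-property in `G`: `H ∩ [H,G]` satisfies the Π-property in `G`. -/
def SatisfiesICPiProperty {G : Type*} [Group G] (H : Subgroup G) : Prop :=
  SatisfiesPiProperty (H ⊓ ⁅H, (⊤ : Subgroup G)⁆)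

section Aux
variable {G G' : Type*} [Group G] [Group G']

theorem PiAux.index_map_equiv (e : G ≃* G') (S : Subgroup G) :
    (S.map (e : G →* G')).index = S.index := by
  rw [Subgroup.map_equiv_eq_comap_symm]
  exact S.index_comap_of_surjective e.symm.surjective

theorem PiAux.card_map_equiv (e : G ≃* G') (S : Subgroup G) :
    Nat.card (S.map (e : G →* G')) = Nat.card S :=
  (Nat.card_congr (e.subgroupMap S).toEquiv).symm

theorem PiAux.normalizer_map_equiv (e : G ≃* G') (S : Subgroup G) :
    Subgroup.normalizer ((S.map (e : G →* G') : Subgroup G') : Set G') =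
      (Subgroup.normalizer (S : Set G)).map (e : G →* G') :=
  (Subgroup.map_equiv_normalizer_eq S e).symm

end Aux

/-- If `H` satisfies the Π-property in `G` and `N ⊴ G`, then `HN/N` satisfies the
Π-property in `G/N`. -/
theorem piProperty_map_quotient {G : Type*} [Group G] [Finite G] (H N : Subgroup G) [N.Normal]
    (h : SatisfiesPiProperty H) :
    SatisfiesPiProperty (H.map (QuotientGroup.mk' N)) := by
  intro K' L' hK' hL' hlt hmin q hq hdvd
  have hπs : Function.Surjective (QuotientGroup.mk' N) := QuotientGroup.mk'_surjective N
  set K : Subgroup G := K'.comap (QuotientGroup.mk' N) with hKdef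
  set L : Subgroup G := L'.comap (QuotientGroup.mk' N) with hLdef
  have hker : (QuotientGroup.mk' N).ker = N := QuotientGroup.ker_mk' N
  have hNK : N ≤ K := by
    intro n hn
    have h1 : (QuotientGroup.mk' N) n = 1 := (QuotientGroup.eq_one_iff n).mpr hn
    rw [hKdef, Subgroup.mem_comap, h1]
    exact K'.one_mem
  have hKn : K.Normal := hK'.comap _
  have hLn : L.Normal := hL'.comap _
  have hmapK : K.map (QuotientGroup.mk' N) = K' :=
    Subgroup.map_comap_eq_self_of_surjective hπs _
  have hmapL : L.map (QuotientGroup.mk' N) = L' :=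
    Subgroup.map_comap_eq_self_of_surjective hπs _
  have hKL : K < L := by
    refine lt_of_le_of_ne (Subgroup.comap_mono hlt.le) ?_
    intro e
    exact hlt.ne (by rw [← hmapK, ← hmapL, e])
  have hminG : ∀ M : Subgroup G, M.Normal → K ≤ M → M ≤ L → M = K ∨ M = L := by
    intro M hM hKM hML
    have hNM : N ≤ M := hNK.trans hKM
    have hMself : (M.map (QuotientGroup.mk' N)).comap (QuotientGroup.mk' N) = M := by
      rw [Subgroup.comap_map_eq, hker, sup_of_le_left hNM]
    have : M.map (QuotientGroup.mk' N) = K' ∨ M.map (QuotientGroup.mk' N) = L' := by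
      refine hmin _ (hM.map _ hπs) ?_ ?_
      · rw [← hmapK]; exact Subgroup.map_mono hKM
      · rw [← hmapL]; exact Subgroup.map_mono hML
    rcases this with e | e
    · left; rw [← hMself, e, hKdef]
    · right; rw [← hMself, e, hLdef]
  haveI := hKn
  clear_value K L
  clear hKdef hLdef hker hπs
  subst hmapK
  subst hmapL
  -- third isomorphism theorem equiv
  let φ : (G ⧸ N) ⧸ K.map (QuotientGroup.mk' N) ≃* G ⧸ K :=
    QuotientGroup.quotientQuotientEquivQuotient N K hNK
  have key : ∀ S : Subgroup G,
      (S.map (QuotientGroup.mk' N)).map (QuotientGroup.mk' (K.map (QuotientGroup.mk' N)))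
        = (S.map (QuotientGroup.mk' K)).map (φ.symm : _ →* _) := by
    intro S
    rw [eq_comm, Subgroup.map_symm_eq_iff_map_eq, Subgroup.map_map, Subgroup.map_map]
    congr 1
  rw [key H, key L] at hdvd ⊢
  rw [← Subgroup.map_inf] at hdvd ⊢
  case hf => exact φ.symm.injective
  case hf => exact φ.symm.injective
  rw [PiAux.normalizer_map_equiv φ.symm, PiAux.index_map_equiv] at hdvd
  rw [PiAux.card_map_equiv]
  exact h K L hKn hLn hKL hminG q hq hdvd
end

section
/- Let G be a finite group, N ⊴ G, H ≤ G with N ≤ H. If H satisfies the IC-Π-property in G, then H/N satisfies the IC-Π-property in G/N. -/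
/-- If `N ⊴ G`, `N ≤ H` and `H` satisfies the `IC`-Π-property in `G`, then `H/N` satisfies
the `IC`-Π-property in `G/N`. -/
theorem icPiProperty_map_quotient_of_le {G : Type*} [Group G] [Finite G] (H N : Subgroup G)
    [N.Normal] (hNH : N ≤ H) (h : SatisfiesICPiProperty H) :
    SatisfiesICPiProperty (H.map (QuotientGroup.mk' N)) := by
  set φ := QuotientGroup.mk' N with hφdef
  have hφ : Function.Surjective φ := QuotientGroup.mk'_surjective N
  set D : Subgroup G := H ⊓ ⁅H, (⊤ : Subgroup G)⁆ with hDdef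
  -- (H/N) ∩ [H/N, G/N] = (H ∩ [H,G])N/N
  have hD : (H.map φ ⊓ ⁅H.map φ, (⊤ : Subgroup (G ⧸ N))⁆) = D.map φ := by
    have htop : (⊤ : Subgroup (G ⧸ N)) = (⊤ : Subgroup G).map φ :=
      (Subgroup.map_top_of_surjective φ hφ).symm
    rw [htop, ← Subgroup.map_commutator, hDdef]
    refine le_antisymm ?_
      (le_inf (Subgroup.map_mono inf_le_left) (Subgroup.map_mono inf_le_right))
    rintro x ⟨hx1, hx2⟩
    obtain ⟨a, ha, rfl⟩ := hx1
    obtain ⟨b, hb, hba⟩ := hx2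
    have hmem : b⁻¹ * a ∈ N := by
      have : φ (b⁻¹ * a) = 1 := by
        rw [map_mul, map_inv, hba, inv_mul_cancel]
      rwa [← QuotientGroup.ker_mk' N, MonoidHom.mem_ker]
    have haH : b ∈ H := by
      have : a * (b⁻¹ * a)⁻¹ ∈ H := H.mul_mem ha (H.inv_mem (hNH hmem))
      simpa [mul_assoc] using this
    exact ⟨b, ⟨haH, hb⟩, hba⟩
  show SatisfiesPiProperty _
  rw [hD]
  intro K' L' hK' hL' hlt hchief q hq hdvd
  set K : Subgroup G := K'.comap φ with hKdef
  set L : Subgroup G := L'.comap φ with hLdef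
  haveI hK : K.Normal := hK'.comap φ
  haveI hL : L.Normal := hL'.comap φ
  have hNK : N ≤ K := by rw [← QuotientGroup.ker_mk' N]; exact Subgroup.ker_le_comap φ K'
  have hK'map : K.map φ = K' := Subgroup.map_comap_eq_self_of_surjective hφ K'
  have hL'map : L.map φ = L' := Subgroup.map_comap_eq_self_of_surjective hφ L'
  have hcm : ∀ M : Subgroup G, N ≤ M → (M.map φ).comap φ = M := fun M hNM => by
    rw [Subgroup.comap_map_eq, QuotientGroup.ker_mk', sup_eq_left.mpr hNM]
  have hKL : K < L := lt_of_le_of_ne (Subgroup.comap_mono hlt.le)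
    (fun hEq => hlt.ne (by rw [← hK'map, ← hL'map, hEq]))
  have hchiefG : ∀ M : Subgroup G, M.Normal → K ≤ M → M ≤ L → M = K ∨ M = L := by
    intro M hM hKM hML
    have hNM : N ≤ M := hNK.trans hKM
    rcases hchief (M.map φ) (hM.map φ hφ)
        (by rw [← hK'map]; exact Subgroup.map_mono hKM)
        (by rw [← hL'map]; exact Subgroup.map_mono hML) with hMK | hML'
    · left; rw [← hcm M hNM, hMK, hKdef]
    · right; rw [← hcm M hNM, hML', hLdef]
  clear hKdef hLdef hcm
  clear_value K L
  subst hK'map hL'map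
  set e := QuotientGroup.quotientQuotientEquivQuotient N K hNK with hedef
  set ψ := QuotientGroup.mk' (K.map φ) with hψdef
  have hcomp : (e.toMonoidHom.comp ψ).comp φ = QuotientGroup.mk' K := by
    ext x
    exact QuotientGroup.quotientQuotientEquivQuotientAux_mk_mk N K hNK x
  have key : ∀ A : Subgroup G,
      Subgroup.map e.toMonoidHom ((A.map φ).map ψ) = A.map (QuotientGroup.mk' K) := by
    intro A
    rw [Subgroup.map_map, Subgroup.map_map, hcomp]
  have hrg : e.toMonoidHom.range = ⊤ :=
    MonoidHom.range_eq_top_of_surjective e.toMonoidHom e.surjective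
  have hkr : e.toMonoidHom.ker = ⊥ := (MonoidHom.ker_eq_bot_iff e.toMonoidHom).mpr e.injective
  have hidx : ∀ S : Subgroup ((G ⧸ N) ⧸ K.map φ), (S.map e.toMonoidHom).index = S.index := by
    intro S
    rw [Subgroup.index_map, hrg, Subgroup.index_top, mul_one, hkr, sup_bot_eq]
  have hcard : ∀ S : Subgroup ((G ⧸ N) ⧸ K.map φ),
      Nat.card S = Nat.card (S.map e.toMonoidHom) :=
    fun S => Nat.card_congr (Subgroup.equivMapOfInjective S e.toMonoidHom e.injective).toEquiv
  have hX : Subgroup.map e.toMonoidHom ((D.map φ).map ψ ⊓ (L.map φ).map ψ)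
      = D.map (QuotientGroup.mk' K) ⊓ L.map (QuotientGroup.mk' K) := by
    rw [Subgroup.map_inf _ _ e.toMonoidHom e.injective, key, key]
  have := h K L hK hL hKL hchiefG q hq (by
    rw [← hidx, Subgroup.map_equiv_normalizer_eq, hX] at hdvd
    exact hdvd)
  rw [hcard, hX]
  exact this
end

section
/- Let G be a finite group, N ⊴ G, H ≤ G with gcd(|H|,|N|) = 1. Then HN ∩ [H,G] = (H ∩ [H,G])(N ∩ [H,G]), and consequently (HN/N) ∩ [HN/N, G/N] = (H ∩ [H,G])N/N. -/
open scoped Pointwise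

open scoped commutatorElement in
/-- `[H, G]` is normal in `G`. -/
lemma commTop_normal {G : Type*} [Group G] (H : Subgroup G) :
    (⁅H, (⊤ : Subgroup G)⁆).Normal := by
  constructor
  intro n hn g
  have hmap : Subgroup.map (MulAut.conj g).toMonoidHom ⁅H, (⊤ : Subgroup G)⁆ ≤
      ⁅H, (⊤ : Subgroup G)⁆ := by
    rw [Subgroup.map_commutator]
    apply Subgroup.commutator_le.mpr
    rintro a ha y -
    obtain ⟨h, hh, rfl⟩ := ha
    have key : ⁅(MulAut.conj g).toMonoidHom h, y⁆ = ⁅h, g⁆⁻¹ * ⁅h, y * g⁆ := by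
      simp only [MulEquiv.toMonoidHom_eq_coe, MonoidHom.coe_coe, MulAut.conj_apply,
        commutatorElement_def]
      group
    rw [key]
    exact mul_mem (inv_mem (Subgroup.commutator_mem_commutator hh (Subgroup.mem_top g)))
      (Subgroup.commutator_mem_commutator hh (Subgroup.mem_top _))
  exact hmap ⟨n, hn, rfl⟩

/-- Key coprimality lemma: if `h ∈ H` and `h ∈ K ⊔ N` with `K, N` normal and
`gcd(|H|, |N|) = 1`, then `h ∈ K`. -/
lemma mem_of_mem_sup_of_coprime {G : Type*} [Group G] (H N K : Subgroup G)
    [N.Normal] [K.Normal] (hcop : Nat.Coprime (Nat.card H) (Nat.card N))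
    {h : G} (hh : h ∈ H) (hkn : h ∈ K ⊔ N) : h ∈ K := by
  rw [← SetLike.mem_coe, Subgroup.mul_normal K N] at hkn
  obtain ⟨k, hk, n, hn, rfl⟩ := hkn
  -- work in G ⧸ K
  have h1 : QuotientGroup.mk' K (k * n) = QuotientGroup.mk' K n := by
    have hk1 : QuotientGroup.mk' K k = 1 := by
      rw [QuotientGroup.mk'_apply, QuotientGroup.eq_one_iff]; exact hk
    rw [map_mul, hk1, one_mul]
  have hdH : orderOf (QuotientGroup.mk' K (k * n)) ∣ Nat.card H :=
    (orderOf_map_dvd _ _).trans (Subgroup.orderOf_dvd_natCard H hh)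
  have hdN : orderOf (QuotientGroup.mk' K (k * n)) ∣ Nat.card N := by
    rw [h1]
    exact (orderOf_map_dvd _ _).trans (Subgroup.orderOf_dvd_natCard N hn)
  have : orderOf (QuotientGroup.mk' K (k * n)) = 1 :=
    Nat.eq_one_of_dvd_coprimes hcop hdH hdN
  rw [orderOf_eq_one_iff] at this
  exact (QuotientGroup.eq_one_iff _).mp this

/-- If `N ⊴ G` and `gcd(|H|,|N|) = 1`, then `HN ∩ [H,G] = (H ∩ [H,G])(N ∩ [H,G])` and
`(HN/N) ∩ [HN/N, G/N] = (H ∩ [H,G])N/N`. -/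
theorem inter_commutator_of_coprime {G : Type*} [Group G] [Finite G] (H N : Subgroup G)
    [N.Normal] (hcop : Nat.Coprime (Nat.card H) (Nat.card N)) :
    ((((H ⊔ N) ⊓ ⁅H, (⊤ : Subgroup G)⁆ : Subgroup G) : Set G) =
      ((H ⊓ ⁅H, (⊤ : Subgroup G)⁆ : Subgroup G) : Set G) *
        ((N ⊓ ⁅H, (⊤ : Subgroup G)⁆ : Subgroup G) : Set G)) ∧
    ((H ⊔ N).map (QuotientGroup.mk' N) ⊓
        ⁅(H ⊔ N).map (QuotientGroup.mk' N), (⊤ : Subgroup (G ⧸ N))⁆ =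
      ((H ⊓ ⁅H, (⊤ : Subgroup G)⁆) ⊔ N).map (QuotientGroup.mk' N)) := by
  set K : Subgroup G := ⁅H, (⊤ : Subgroup G)⁆ with hK
  have : K.Normal := commTop_normal H
  -- the key fact: any h ∈ H lying in K ⊔ N lies in K
  have key : ∀ h ∈ H, h ∈ K ⊔ N → h ∈ K := fun h hh hkn =>
    mem_of_mem_sup_of_coprime H N K hcop hh hkn
  constructor
  · apply Set.Subset.antisymm
    · rintro x hx
      rw [SetLike.mem_coe, Subgroup.mem_inf] at hx
      obtain ⟨hxHN, hxK⟩ := hx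
      rw [← SetLike.mem_coe, Subgroup.mul_normal H N] at hxHN
      obtain ⟨h, hh, n, hn, rfl⟩ := hxHN
      have hhK : h ∈ K := by
        apply key h hh
        have : (h * n) * n⁻¹ ∈ K ⊔ N :=
          mul_mem (le_sup_left (a := K) (b := N) hxK)
            (le_sup_right (a := K) (b := N) (inv_mem hn))
        simpa using this
      have hnK : n ∈ K := by
        have : h⁻¹ * (h * n) ∈ K := mul_mem (inv_mem hhK) hxK
        simpa using this
      exact ⟨h, Subgroup.mem_inf.mpr ⟨hh, hhK⟩, n, Subgroup.mem_inf.mpr ⟨hn, hnK⟩, rfl⟩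
    · rintro x ⟨a, haHK, b, hbNK, rfl⟩
      rw [SetLike.mem_coe, Subgroup.mem_inf] at haHK hbNK
      rw [SetLike.mem_coe, Subgroup.mem_inf]
      exact ⟨mul_mem (le_sup_left (a := H) (b := N) haHK.1)
        (le_sup_right (a := H) (b := N) hbNK.1), mul_mem haHK.2 hbNK.2⟩
  · have hsurj : Function.Surjective (QuotientGroup.mk' N) := QuotientGroup.mk'_surjective N
    have htop : (⊤ : Subgroup G).map (QuotientGroup.mk' N) = ⊤ :=
      Subgroup.map_top_of_surjective _ hsurj
    have hNmap : N.map (QuotientGroup.mk' N) = ⊥ := by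
      rw [eq_bot_iff]
      rintro x ⟨n, hn, rfl⟩
      simpa [QuotientGroup.eq_one_iff] using hn
    have hHN : (H ⊔ N).map (QuotientGroup.mk' N) = H.map (QuotientGroup.mk' N) := by
      rw [Subgroup.map_sup, hNmap, sup_bot_eq]
    rw [hHN]
    have hcomm : ⁅H.map (QuotientGroup.mk' N), (⊤ : Subgroup (G ⧸ N))⁆
        = K.map (QuotientGroup.mk' N) := by
      rw [hK, Subgroup.map_commutator, htop]
    rw [hcomm, Subgroup.map_sup, hNmap, sup_bot_eq]
    apply le_antisymm
    · rintro x ⟨⟨h, hh, rfl⟩, ⟨k, hk, hkx⟩⟩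
      have : h ∈ K ⊔ N := by
        have h2 : k⁻¹ * h ∈ N := by
          have h3 : (QuotientGroup.mk' N) (k⁻¹ * h) = 1 := by
            rw [map_mul, map_inv, hkx]
            simp
          rw [QuotientGroup.mk'_apply, QuotientGroup.eq_one_iff] at h3
          exact h3
        have heq : h = k * (k⁻¹ * h) := by group
        rw [heq]
        exact mul_mem (le_sup_left (a := K) (b := N) hk)
          (le_sup_right (a := K) (b := N) h2)
      exact ⟨h, ⟨hh, key h hh this⟩, rfl⟩
    · exact le_inf (Subgroup.map_mono inf_le_left) (Subgroup.map_mono inf_le_right)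
end

section
/- Let G be a finite group, N ⊴ G, H ≤ G with gcd(|H|,|N|) = 1. If H satisfies the IC-Π-property in G, then HN/N satisfies the IC-Π-property in G/N. -/
section Aux

variable {G : Type*} [Group G]

open scoped commutatorElement

/-- `[H, G]` is always normal in `G`. -/
theorem commutator_top_normal (H : Subgroup G) : (⁅H, (⊤ : Subgroup G)⁆).Normal := by
  constructor
  intro n hn g
  have key : (⁅H, (⊤ : Subgroup G)⁆).map (MulAut.conj g).toMonoidHom
      ≤ ⁅H, (⊤ : Subgroup G)⁆ := by
    rw [Subgroup.map_commutator, Subgroup.commutator_le]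
    rintro a ⟨x, hx, rfl⟩ k -
    have hid : ⁅(MulAut.conj g).toMonoidHom x, k⁆ = ⁅x, g⁆⁻¹ * ⁅x, k * g⁆ := by
      simp only [MulEquiv.coe_toMonoidHom, MulAut.conj_apply, commutatorElement_def]
      group
    rw [hid]
    exact mul_mem (inv_mem (Subgroup.commutator_mem_commutator hx (Subgroup.mem_top g)))
      (Subgroup.commutator_mem_commutator hx (Subgroup.mem_top (k * g)))
  exact key ⟨n, hn, rfl⟩

theorem inf_sup_le_inf_of_coprime [Finite G] (H N C : Subgroup G) [N.Normal] [C.Normal]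
    (hcop : Nat.Coprime (Nat.card H) (Nat.card N)) :
    H ⊓ (C ⊔ N) ≤ H ⊓ C := by
  set E := H ⊓ (C ⊔ N) with hE
  have hmap : E.map (QuotientGroup.mk' C) ≤ N.map (QuotientGroup.mk' C) := by
    refine le_trans (Subgroup.map_mono inf_le_right) ?_
    rw [Subgroup.map_sup,
      (Subgroup.map_eq_bot_iff _).mpr (QuotientGroup.ker_mk' C).ge, bot_sup_eq]
  have d1 : Nat.card (E.map (QuotientGroup.mk' C)) ∣ Nat.card H :=
    (Subgroup.card_dvd_of_surjective _ ((QuotientGroup.mk' C).subgroupMap_surjective E)).trans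
      (Subgroup.card_dvd_of_le inf_le_left)
  have d2 : Nat.card (E.map (QuotientGroup.mk' C)) ∣ Nat.card N :=
    (Subgroup.card_dvd_of_le hmap).trans
      (Subgroup.card_dvd_of_surjective _ ((QuotientGroup.mk' C).subgroupMap_surjective N))
  have h1 : Nat.card (E.map (QuotientGroup.mk' C)) = 1 :=
    Nat.Coprime.eq_one_of_dvd (Nat.Coprime.coprime_dvd_left d1 hcop) d2
  have hEC : E ≤ C := by
    have h2 := Subgroup.card_eq_one.mp h1
    rwa [Subgroup.map_eq_bot_iff, QuotientGroup.ker_mk'] at h2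
  exact le_inf inf_le_left hEC

theorem map_inf_commutator_top [Finite G] (H N : Subgroup G) [N.Normal]
    (hcop : Nat.Coprime (Nat.card H) (Nat.card N)) :
    H.map (QuotientGroup.mk' N) ⊓ ⁅H.map (QuotientGroup.mk' N), (⊤ : Subgroup (G ⧸ N))⁆
      = (H ⊓ ⁅H, (⊤ : Subgroup G)⁆).map (QuotientGroup.mk' N) := by
  haveI hC : (⁅H, (⊤ : Subgroup G)⁆).Normal := commutator_top_normal H
  have hcomm : ⁅H.map (QuotientGroup.mk' N), (⊤ : Subgroup (G ⧸ N))⁆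
      = (⁅H, (⊤ : Subgroup G)⁆).map (QuotientGroup.mk' N) := by
    rw [Subgroup.map_commutator,
      Subgroup.map_top_of_surjective _ (QuotientGroup.mk'_surjective N)]
  rw [hcomm]
  apply le_antisymm
  · rintro x hx
    rw [Subgroup.mem_inf] at hx
    obtain ⟨⟨a, ha, rfl⟩, ⟨c, hc, hceq⟩⟩ := hx
    have hn : c⁻¹ * a ∈ N := by
      have h1 : c⁻¹ * a ∈ (QuotientGroup.mk' N).ker := by
        rw [MonoidHom.mem_ker, map_mul, map_inv, hceq, inv_mul_cancel]
      rwa [QuotientGroup.ker_mk'] at h1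
    have hmem : a ∈ H ⊓ (⁅H, (⊤ : Subgroup G)⁆ ⊔ N) := by
      refine ⟨ha, ?_⟩
      have h2 : a = c * (c⁻¹ * a) := by group
      rw [h2]
      exact mul_mem ((le_sup_left : _ ≤ ⁅H, (⊤ : Subgroup G)⁆ ⊔ N) hc)
        ((le_sup_right : _ ≤ ⁅H, (⊤ : Subgroup G)⁆ ⊔ N) hn)
    exact Subgroup.mem_map_of_mem _ (inf_sup_le_inf_of_coprime H N _ hcop hmem)
  · exact le_inf (Subgroup.map_mono inf_le_left) (Subgroup.map_mono inf_le_right)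

end Aux

/-- If `N ⊴ G`, `gcd(|H|,|N|) = 1` and `H` satisfies the `IC`-Π-property in `G`, then `HN/N`
satisfies the `IC`-Π-property in `G/N`. -/
theorem icPiProperty_map_quotient_of_coprime {G : Type*} [Group G] [Finite G] (H N : Subgroup G)
    [N.Normal] (hcop : Nat.Coprime (Nat.card H) (Nat.card N))
    (h : SatisfiesICPiProperty H) :
    SatisfiesICPiProperty (H.map (QuotientGroup.mk' N)) := by
  intro K' L' hK' hL' hlt hchief
  haveI := hK'
  obtain ⟨K, hNK, rfl⟩ : ∃ K : Subgroup G, N ≤ K ∧ K' = K.map (QuotientGroup.mk' N) := by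
    refine ⟨K'.comap (QuotientGroup.mk' N), ?_, ?_⟩
    · intro n hn
      simp only [Subgroup.mem_comap]
      have h1 : (QuotientGroup.mk' N) n = 1 := by
        rw [QuotientGroup.mk'_apply, (QuotientGroup.eq_one_iff n).mpr hn]
      rw [h1]; exact K'.one_mem
    · exact (Subgroup.map_comap_eq_self_of_surjective
        (QuotientGroup.mk'_surjective N) K').symm
  obtain ⟨L, hNL, rfl⟩ : ∃ L : Subgroup G, N ≤ L ∧ L' = L.map (QuotientGroup.mk' N) := by
    refine ⟨L'.comap (QuotientGroup.mk' N), ?_, ?_⟩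
    · intro n hn
      simp only [Subgroup.mem_comap]
      have h1 : (QuotientGroup.mk' N) n = 1 := by
        rw [QuotientGroup.mk'_apply, (QuotientGroup.eq_one_iff n).mpr hn]
      rw [h1]; exact L'.one_mem
    · exact (Subgroup.map_comap_eq_self_of_surjective
        (QuotientGroup.mk'_surjective N) L').symm
  have hkerK : (QuotientGroup.mk' N).ker ≤ K := by rw [QuotientGroup.ker_mk']; exact hNK
  have hkerL : (QuotientGroup.mk' N).ker ≤ L := by rw [QuotientGroup.ker_mk']; exact hNL
  have hcomapK : (K.map (QuotientGroup.mk' N)).comap (QuotientGroup.mk' N) = K :=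
    Subgroup.comap_map_eq_self hkerK
  have hcomapL : (L.map (QuotientGroup.mk' N)).comap (QuotientGroup.mk' N) = L :=
    Subgroup.comap_map_eq_self hkerL
  haveI hKn : K.Normal := by
    have h1 := hK'.comap (QuotientGroup.mk' N)
    rwa [hcomapK] at h1
  haveI hLn : L.Normal := by
    have h1 := hL'.comap (QuotientGroup.mk' N)
    rwa [hcomapL] at h1
  have hKL : K < L := by
    rw [← hcomapK, ← hcomapL]
    exact (Subgroup.comap_lt_comap_of_surjective (QuotientGroup.mk'_surjective N)).mpr hlt
  have hchiefG : ∀ M : Subgroup G, M.Normal → K ≤ M → M ≤ L → M = K ∨ M = L := by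
    intro M hM hKM hML
    have hMc : (M.map (QuotientGroup.mk' N)).comap (QuotientGroup.mk' N) = M :=
      Subgroup.comap_map_eq_self (by rw [QuotientGroup.ker_mk']; exact hNK.trans hKM)
    rcases hchief (M.map (QuotientGroup.mk' N)) (hM.map _ (QuotientGroup.mk'_surjective N))
        (Subgroup.map_mono hKM) (Subgroup.map_mono hML) with h1 | h1
    · left; rw [← hMc, h1, hcomapK]
    · right; rw [← hMc, h1, hcomapL]
  have key := h K L hKn hLn hKL hchiefG
  intro q hq hdvd
  rw [map_inf_commutator_top H N hcop] at hdvd ⊢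
  set D := H ⊓ ⁅H, (⊤ : Subgroup G)⁆ with hD
  set φ := QuotientGroup.quotientQuotientEquivQuotient N K hNK with hφdef
  have hφinj : Function.Injective φ.toMonoidHom := φ.injective
  have hφsurj : Function.Surjective ⇑φ.toMonoidHom := φ.surjective
  have hφ : ∀ S : Subgroup G,
      ((S.map (QuotientGroup.mk' N)).map
        (QuotientGroup.mk' (K.map (QuotientGroup.mk' N)))).map φ.toMonoidHom
        = S.map (QuotientGroup.mk' K) := by
    intro S
    rw [Subgroup.map_map, Subgroup.map_map]
    have hcomp : (φ.toMonoidHom.comp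
        (QuotientGroup.mk' (K.map (QuotientGroup.mk' N)))).comp (QuotientGroup.mk' N)
        = QuotientGroup.mk' K := by
      ext x
      simp [hφdef, QuotientGroup.quotientQuotientEquivQuotient,
        QuotientGroup.quotientQuotientEquivQuotientAux_mk_mk]
      rfl
    rw [hcomp]
  have hXmap : (((D.map (QuotientGroup.mk' N)).map
        (QuotientGroup.mk' (K.map (QuotientGroup.mk' N)))) ⊓
      ((L.map (QuotientGroup.mk' N)).map
        (QuotientGroup.mk' (K.map (QuotientGroup.mk' N))))).map φ.toMonoidHom
      = D.map (QuotientGroup.mk' K) ⊓ L.map (QuotientGroup.mk' K) := by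
    rw [Subgroup.map_inf _ _ _ hφinj, hφ D, hφ L]
  have hcard : Nat.card ↥(((D.map (QuotientGroup.mk' N)).map
        (QuotientGroup.mk' (K.map (QuotientGroup.mk' N)))) ⊓
      ((L.map (QuotientGroup.mk' N)).map
        (QuotientGroup.mk' (K.map (QuotientGroup.mk' N)))))
      = Nat.card ↥(D.map (QuotientGroup.mk' K) ⊓ L.map (QuotientGroup.mk' K)) := by
    rw [← hXmap]
    exact Nat.card_congr (Subgroup.equivMapOfInjective _ _ hφinj).toEquiv
  have hnor : (Subgroup.normalizer ((((D.map (QuotientGroup.mk' N)).map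
        (QuotientGroup.mk' (K.map (QuotientGroup.mk' N)))) ⊓
      ((L.map (QuotientGroup.mk' N)).map
        (QuotientGroup.mk' (K.map (QuotientGroup.mk' N)))) :
          Subgroup ((G ⧸ N) ⧸ K.map (QuotientGroup.mk' N))) :
          Set ((G ⧸ N) ⧸ K.map (QuotientGroup.mk' N)))).index
      = (Subgroup.normalizer ((D.map (QuotientGroup.mk' K) ⊓ L.map (QuotientGroup.mk' K) :
          Subgroup (G ⧸ K)) : Set (G ⧸ K))).index := by
    have hker : φ.toMonoidHom.ker = ⊥ := (MonoidHom.ker_eq_bot_iff _).mpr hφinj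
    rw [← hXmap, ← Subgroup.map_equiv_normalizer_eq _ φ,
      Subgroup.index_map_eq _ hφsurj (hker.le.trans bot_le)]
  rw [hcard]
  exact key q hq (by rw [← hnor]; exact hdvd)
end

section
/- Let G be a finite group, T a minimal normal subgroup of G, and L ≤ G with |T| = |L| = p for a prime p. If LT satisfies the IC-Π-property in G, then L satisfies the IC-Π-property in G. -/
open Subgroup

private lemma card_sup_dvd_aux {G : Type*} [Group G] [Finite G] (H K : Subgroup G)
    (hK : K.Normal) :
    Nat.card ↥(H ⊔ K) ∣ Nat.card H * Nat.card K := by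
  haveI := hK
  have h1 : Nat.card ↥(K.subgroupOf (H ⊔ K)) * (K.subgroupOf (H ⊔ K)).index
      = Nat.card ↥(H ⊔ K) := Subgroup.card_mul_index _
  have h2 : Nat.card ↥(K.subgroupOf (H ⊔ K)) = Nat.card K :=
    Nat.card_congr (Subgroup.subgroupOfEquivOfLe le_sup_right).toEquiv
  have h3 : (K.subgroupOf (H ⊔ K)).index = K.relIndex H := by
    rw [show (K.subgroupOf (H ⊔ K)).index = K.relIndex (H ⊔ K) from rfl]
    exact Subgroup.relIndex_sup_right H K
  have h4 : K.relIndex H ∣ Nat.card H := Subgroup.index_dvd_card _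
  rw [← h1, h2, h3, mul_comm]
  exact mul_dvd_mul h4 dvd_rfl

/-- If `T` is a minimal normal subgroup of `G`, `|T| = |L| = p`, and `LT` satisfies the
`IC`-Π-property in `G`, then so does `L`. -/
theorem icPiProperty_of_mul_minimal_normal {G : Type*} [Group G] [Finite G] (p : ℕ)
    (hp : p.Prime) (T L : Subgroup G) (hT : T.Normal) (hTbot : T ≠ ⊥)
    (hTmin : ∀ S : Subgroup G, S.Normal → S ≤ T → S = ⊥ ∨ S = T)
    (hcardT : Nat.card T = p) (hcardL : Nat.card L = p)
    (h : SatisfiesICPiProperty (L ⊔ T)) :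
    SatisfiesICPiProperty L := by
  intro K N hK hN hKN hchief q hq hqd
  set f := QuotientGroup.mk' K with hf
  have hker : f.ker = K := QuotientGroup.ker_mk' K
  have hfsurj : Function.Surjective f := QuotientGroup.mk'_surjective K
  set A : Subgroup (G ⧸ K) := (L ⊓ ⁅L, (⊤ : Subgroup G)⁆).map f ⊓ N.map f with hA
  set B : Subgroup (G ⧸ K) :=
    ((L ⊔ T) ⊓ ⁅L ⊔ T, (⊤ : Subgroup G)⁆).map f ⊓ N.map f with hB
  -- basic cardinality facts
  have hcardLbar : Nat.card (L.map f) ∣ p := by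
    rw [← hcardL]
    exact Subgroup.card_dvd_of_surjective (f.subgroupMap L) (f.subgroupMap_surjective L)
  have hcardTbar : Nat.card (T.map f) ∣ p := by
    rw [← hcardT]
    exact Subgroup.card_dvd_of_surjective (f.subgroupMap T) (f.subgroupMap_surjective T)
  have hAL : A ≤ L.map f := le_trans inf_le_left (Subgroup.map_mono inf_le_left)
  have hAdvd : Nat.card A ∣ p := dvd_trans (Subgroup.card_dvd_of_le hAL) hcardLbar
  rcases (Nat.Prime.eq_one_or_self_of_dvd hp _ hAdvd) with hA1 | hAp
  · -- A is trivial : the normalizer is everything, contradiction with q prime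
    have hAbot : A = ⊥ := Subgroup.eq_bot_of_card_eq _ hA1
    rw [hAbot] at hqd
    rw [Subgroup.normalizer_eq_top_iff.mpr inferInstance, Subgroup.index_top] at hqd
    exact absurd (Nat.dvd_one.mp hqd) hq.ne_one
  · -- A has order p
    have hAeqL : A = L.map f := by
      refine Subgroup.eq_of_le_of_card_ge hAL ?_
      rw [hAp]
      exact Nat.le_of_dvd hp.pos hcardLbar
    have hcardLbar' : Nat.card (L.map f) = p := by rw [← hAeqL, hAp]
    have hLN : L.map f ≤ N.map f := hAeqL ▸ inf_le_right
    have hAB : A ≤ B :=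
      inf_le_inf (Subgroup.map_mono (inf_le_inf le_sup_left
        (Subgroup.commutator_mono le_sup_left le_rfl))) le_rfl
    by_cases hBA : B = A
    · have := h K N hK hN hKN hchief q hq (by rw [← hB, hBA]; exact hqd)
      rwa [← hB, hBA] at this
    · -- B strictly contains A; we show T·K = N and A is normal, contradiction
      exfalso
      have hBH : B ≤ (L ⊔ T).map f := le_trans inf_le_left (Subgroup.map_mono inf_le_left)
      haveI : (T.map f).Normal := Subgroup.Normal.map hT f hfsurj
      have hHsup : (L ⊔ T).map f = L.map f ⊔ T.map f := Subgroup.map_sup L T f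
      have hcardH : Nat.card ((L ⊔ T).map f) ∣ p * p := by
        rw [hHsup]
        exact dvd_trans (card_sup_dvd_aux (L.map f) (T.map f) inferInstance)
          (mul_dvd_mul hcardLbar hcardTbar)
      have hpB : p ∣ Nat.card B := hAp ▸ Subgroup.card_dvd_of_le hAB
      have hBdvd : Nat.card B ∣ p * p := dvd_trans (Subgroup.card_dvd_of_le hBH) hcardH
      have hBne : Nat.card B ≠ p := by
        intro hc
        exact hBA (Subgroup.eq_of_le_of_card_ge hAB (by rw [hc, hAp])).symm
      have hcardB : Nat.card B = p * p := by
        rw [← pow_two] at hBdvd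
        obtain ⟨i, hi, hcard⟩ := (Nat.dvd_prime_pow hp).mp hBdvd
        interval_cases i
        · rw [pow_zero] at hcard
          rw [hcard] at hpB
          exact absurd (Nat.dvd_one.mp hpB) hp.ne_one
        · rw [pow_one] at hcard; exact absurd hcard hBne
        · rw [hcard]; ring
      have hBeqH : B = (L ⊔ T).map f := by
        refine Subgroup.eq_of_le_of_card_ge hBH ?_
        rw [hcardB]
        exact Nat.le_of_dvd (Nat.mul_pos hp.pos hp.pos) hcardH
      -- T is not contained in K
      have hTK : ¬ T ≤ K := by
        intro hc
        have : T.map f = ⊥ := (Subgroup.map_eq_bot_iff T).mpr (by rwa [hker])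
        have hH : (L ⊔ T).map f = L.map f := by rw [hHsup, this, sup_bot_eq]
        rw [← hH, ← hBeqH, hcardB] at hcardLbar'
        nlinarith [hp.two_le]
      have hTN : T ≤ N := by
        have h1 : T.map f ≤ N.map f := by
          refine le_trans ?_ (hB ▸ inf_le_right : B ≤ N.map f)
          rw [hBeqH]
          exact Subgroup.map_mono le_sup_right
        calc T ≤ Subgroup.comap f (T.map f) := Subgroup.le_comap_map f T
          _ ≤ Subgroup.comap f (N.map f) := Subgroup.comap_mono h1
          _ = N := by rw [Subgroup.comap_map_eq, hker, sup_eq_left.mpr hKN.le]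
      haveI := hT; haveI := hK
      rcases hchief (T ⊔ K) inferInstance le_sup_right (sup_le hTN hKN.le) with hMK | hMN
      · exact hTK (le_sup_left.trans hMK.le)
      · have hNbar : N.map f = T.map f := by
          rw [← hMN, Subgroup.map_sup, (Subgroup.map_eq_bot_iff K).mpr hker.ge,
            sup_bot_eq]
        have hcardN : Nat.card (N.map f) ∣ p := hNbar ▸ hcardTbar
        have hLNeq : L.map f = N.map f :=
          Subgroup.eq_of_le_of_card_ge hLN
            (by rw [hcardLbar']; exact Nat.le_of_dvd hp.pos hcardN)
        haveI : (N.map f).Normal := Subgroup.Normal.map hN f hfsurj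
        have hAnorm : A.Normal := by rw [hAeqL, hLNeq]; infer_instance
        rw [Subgroup.normalizer_eq_top_iff.mpr hAnorm, Subgroup.index_top] at hqd
        exact hq.ne_one (Nat.dvd_one.mp hqd)
end

section
/- Let U, V, W be subgroups of a group G. Then U ∩ (VW) = (U ∩ V)(U ∩ W) (as sets) if and only if UV ∩ UW = U(V ∩ W) (as sets). -/
open scoped Pointwise

/-- For subgroups `U, V, W` of `G`: `U ∩ VW = (U ∩ V)(U ∩ W)` iff `UV ∩ UW = U(V ∩ W)`,
as sets. -/
theorem dedekind_type_identity_iff {G : Type*} [Group G] (U V W : Subgroup G) :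
    ((U : Set G) ∩ ((V : Set G) * (W : Set G)) =
        ((U ⊓ V : Subgroup G) : Set G) * ((U ⊓ W : Subgroup G) : Set G)) ↔
      (((U : Set G) * (V : Set G)) ∩ ((U : Set G) * (W : Set G)) =
        (U : Set G) * ((V ⊓ W : Subgroup G) : Set G)) := by
  constructor
  · intro h
    apply Set.Subset.antisymm
    · rintro x ⟨hxv, hxw⟩
      rw [Set.mem_mul] at hxv hxw
      obtain ⟨u1, hu1, v, hv, hx1⟩ := hxv
      obtain ⟨u2, hu2, w, hw, hx2⟩ := hxw
      have h1 : u1 * v = u2 * w := hx1.trans hx2.symm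
      have hvw : v * w⁻¹ = u1⁻¹ * u2 := by
        rw [eq_inv_mul_iff_mul_eq, ← mul_assoc, mul_inv_eq_iff_eq_mul]; exact h1
      have hkey : u1⁻¹ * u2 ∈ (U : Set G) ∩ ((V : Set G) * (W : Set G)) := by
        refine ⟨mul_mem (inv_mem hu1) hu2, ?_⟩
        rw [Set.mem_mul]
        exact ⟨v, hv, w⁻¹, inv_mem hw, hvw⟩
      rw [h, Set.mem_mul] at hkey
      obtain ⟨a, ha, b, hb, hab⟩ := hkey
      rw [SetLike.mem_coe, Subgroup.mem_inf] at ha hb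
      have hab' : v * w⁻¹ = a * b := hvw.trans hab.symm
      have hWmem : a⁻¹ * v = b * w :=
        calc a⁻¹ * v = a⁻¹ * (v * w⁻¹) * w := by group
          _ = a⁻¹ * (a * b) * w := by rw [hab']
          _ = b * w := by group
      rw [Set.mem_mul]
      refine ⟨u1 * a, mul_mem hu1 ha.1, a⁻¹ * v, ?_, by rw [← hx1]; group⟩
      rw [SetLike.mem_coe, Subgroup.mem_inf]
      exact ⟨mul_mem (inv_mem ha.2) hv, hWmem ▸ mul_mem hb.2 hw⟩
    · rintro x hx
      rw [Set.mem_mul] at hx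
      obtain ⟨a, ha, b, hb, hab⟩ := hx
      rw [SetLike.mem_coe, Subgroup.mem_inf] at hb
      exact hab ▸ ⟨Set.mul_mem_mul ha hb.1, Set.mul_mem_mul ha hb.2⟩
  · intro h
    apply Set.Subset.antisymm
    · rintro x ⟨hxU, hxVW⟩
      rw [Set.mem_mul] at hxVW
      obtain ⟨v, hv, w, hw, hvw⟩ := hxVW
      have hkey : w⁻¹ ∈ ((U : Set G) * (V : Set G)) ∩ ((U : Set G) * (W : Set G)) := by
        constructor
        · rw [Set.mem_mul]
          refine ⟨x⁻¹, inv_mem hxU, v, hv, ?_⟩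
          rw [← hvw]; group
        · rw [Set.mem_mul]
          exact ⟨1, one_mem U, w⁻¹, inv_mem hw, one_mul _⟩
      rw [h, Set.mem_mul] at hkey
      obtain ⟨u, hu, t, ht, hut⟩ := hkey
      rw [SetLike.mem_coe, Subgroup.mem_inf] at ht
      have hw' : w = t⁻¹ * u⁻¹ := by rw [← mul_inv_rev, hut, inv_inv]
      rw [Set.mem_mul]
      refine ⟨v * t⁻¹, ?_, u⁻¹, ?_, by rw [← hvw, hw']; group⟩
      · rw [SetLike.mem_coe, Subgroup.mem_inf]
        refine ⟨?_, mul_mem hv (inv_mem ht.1)⟩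
        have hx : v * t⁻¹ = x * u := by rw [← hvw, hw']; group
        rw [hx]; exact mul_mem hxU hu
      · rw [SetLike.mem_coe, Subgroup.mem_inf]
        refine ⟨inv_mem hu, ?_⟩
        have hu' : u⁻¹ = t * w := by rw [hw']; group
        rw [hu']; exact mul_mem ht.2 hw
    · rintro x hx
      rw [Set.mem_mul] at hx
      obtain ⟨a, ha, b, hb, hab⟩ := hx
      rw [SetLike.mem_coe, Subgroup.mem_inf] at ha hb
      exact hab ▸ ⟨mul_mem ha.1 hb.1, Set.mul_mem_mul ha.2 hb.2⟩
end

section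
/- Let X be a non-abelian finite simple group whose Sylow p-subgroups have order p, let x ∈ X have order p, and let Y = ⟨y⟩ be cyclic of order p. Set G = X × Y and H = ⟨xy⟩. Then H ∩ [H,G] = 1, so H satisfies the IC-Π-property in G, but H does not satisfy the Π-property in G (witnessed by the chief factor G/Y, for which |G/Y : N_{G/Y}(HY/Y)| is not a p-number). -/
/-- The trivial subgroup satisfies the Π-property. -/
lemma satisfiesPiProperty_bot {G : Type*} [Group G] : SatisfiesPiProperty (⊥ : Subgroup G) := by
  intro K L hK hL hKL hchief q hq hdvd
  exfalso
  rw [Subgroup.map_bot, bot_inf_eq, Subgroup.normalizer_eq_top_iff.mpr inferInstance,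
    Subgroup.index_top, Nat.dvd_one] at hdvd
  exact hq.one_lt.ne' hdvd

/-- In a non-abelian finite simple group whose Sylow `p`-subgroups have order `p`,
the normalizer of a subgroup generated by an element of order `p` has index divisible by
a prime different from `p`. -/
lemma exists_prime_ne_dvd_index_normalizer {X : Type*} [Group X] [Finite X] (p : ℕ)
    (hp : p.Prime) (hsimple : IsSimpleGroup X) (hna : ∃ a b : X, a * b ≠ b * a)
    (hSyl : ∀ P : Sylow p X, Nat.card P = p) (x : X) (hx : orderOf x = p) :
    ∃ q : ℕ, q.Prime ∧ q ≠ p ∧ q ∣ (Subgroup.normalizer (Subgroup.zpowers x : Set X)).index := by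
  haveI := Fact.mk hp
  set P := Subgroup.zpowers x with hPdef
  have hcard : Nat.card P = p := by rw [Nat.card_zpowers, hx]
  have hP : IsPGroup p P := IsPGroup.of_card (by rw [hcard, pow_one])
  obtain ⟨Q, hPQ⟩ := hP.exists_le_sylow
  have hPQ' : P = ↑Q := Subgroup.eq_of_le_of_card_ge hPQ (by rw [hcard, hSyl Q])
  have hidx : (Subgroup.normalizer (P : Set X)).index = Nat.card (Sylow p X) := by
    rw [hPQ']; exact (Sylow.card_eq_index_normalizer Q).symm
  have hne1 : Nat.card (Sylow p X) ≠ 1 := by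
    intro h
    have : Subgroup.normalizer (P : Set X) = ⊤ := Subgroup.index_eq_one.mp (by rw [hidx, h])
    have hPn : P.Normal := Subgroup.normalizer_eq_top_iff.mp this
    rcases hsimple.eq_bot_or_eq_top_of_normal P hPn with hb | ht
    · have : x ∈ P := Subgroup.mem_zpowers x
      rw [hb, Subgroup.mem_bot] at this
      rw [this, orderOf_one] at hx
      exact hp.one_lt.ne' hx.symm
    · obtain ⟨a, b, hab⟩ := hna
      have ha : a ∈ P := ht ▸ Subgroup.mem_top a
      have hb : b ∈ P := ht ▸ Subgroup.mem_top b
      obtain ⟨m, hm⟩ := ha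
      obtain ⟨n, hn⟩ := hb
      exact hab (by rw [← hm, ← hn, ← zpow_add, ← zpow_add, add_comm])
  refine ⟨(Nat.card (Sylow p X)).minFac, Nat.minFac_prime hne1, ?_, ?_⟩
  · intro h
    have hd := Nat.minFac_dvd (Nat.card (Sylow p X))
    rw [h] at hd
    exact not_dvd_card_sylow p X hd
  · rw [hidx]; exact Nat.minFac_dvd _

/-- Let `X` be a non-abelian finite simple group with Sylow `p`-subgroups of order `p`,
`x ∈ X` of order `p`, `Y = ⟨y⟩` cyclic of order `p`, `G = X × Y` and `H = ⟨xy⟩`.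
Then `H ∩ [H,G] = 1` (so `H` satisfies the `IC`-Π-property in `G`), but `H` does not
satisfy the Π-property in `G`. -/
theorem example_ic_pi_not_pi {X Y : Type*} [Group X] [Group Y] [Finite X] [Finite Y]
    (p : ℕ) (hp : p.Prime) (hsimple : IsSimpleGroup X) (hna : ∃ a b : X, a * b ≠ b * a)
    (hSyl : ∀ P : Sylow p X, Nat.card P = p)
    (x : X) (hx : orderOf x = p) (y : Y) (hy : orderOf y = p)
    (hYgen : ∀ z : Y, z ∈ Subgroup.zpowers y) :
    Subgroup.zpowers ((x, y) : X × Y) ⊓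
        ⁅Subgroup.zpowers ((x, y) : X × Y), (⊤ : Subgroup (X × Y))⁆ = ⊥ ∧
      SatisfiesICPiProperty (Subgroup.zpowers ((x, y) : X × Y)) ∧
      ¬ SatisfiesPiProperty (Subgroup.zpowers ((x, y) : X × Y)) := by
  have h1 : Subgroup.zpowers ((x, y) : X × Y) ⊓
      ⁅Subgroup.zpowers ((x, y) : X × Y), (⊤ : Subgroup (X × Y))⁆ = ⊥ := by
    have hcomm : ∀ a b : Y, a * b = b * a := by
      intro a b
      obtain ⟨m, hm⟩ := hYgen a
      obtain ⟨n, hn⟩ := hYgen b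
      rw [← hm, ← hn, ← zpow_add, ← zpow_add, add_comm]
    rw [eq_bot_iff]
    rintro g ⟨hg1, hg2⟩
    obtain ⟨k, hk⟩ := hg1
    have h2 : g.2 ∈ Subgroup.map (MonoidHom.snd X Y)
        ⁅Subgroup.zpowers ((x, y) : X × Y), (⊤ : Subgroup (X × Y))⁆ := ⟨g, hg2, rfl⟩
    rw [Subgroup.map_commutator] at h2
    have hle : ⁅Subgroup.map (MonoidHom.snd X Y) (Subgroup.zpowers ((x, y) : X × Y)),
        Subgroup.map (MonoidHom.snd X Y) (⊤ : Subgroup (X × Y))⁆ ≤ ⊥ := by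
      rw [Subgroup.commutator_le]
      intro a _ b _
      rw [Subgroup.mem_bot, commutatorElement_eq_one_iff_commute]
      exact hcomm a b
    have hy2 : g.2 = 1 := Subgroup.mem_bot.mp (hle h2)
    have hk2 : y ^ k = 1 := by rw [← hk] at hy2; simpa using hy2
    have hdvd : (p : ℤ) ∣ k := by
      rw [← hy]; exact orderOf_dvd_iff_zpow_eq_one.mpr hk2
    have hx2 : x ^ k = 1 := by
      rw [← orderOf_dvd_iff_zpow_eq_one, hx]; exact hdvd
    rw [Subgroup.mem_bot, ← hk]
    exact Prod.ext (by simpa using hx2) (by simpa using hk2)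
  refine ⟨h1, ?_, ?_⟩
  · rw [SatisfiesICPiProperty, h1]
    exact satisfiesPiProperty_bot
  · intro hPi
    haveI := Fact.mk hp
    set f := MonoidHom.fst X Y with hf
    have hfsurj : Function.Surjective f := fun a => ⟨(a, 1), rfl⟩
    set K := f.ker with hK
    haveI hKn : K.Normal := f.normal_ker
    have hx1 : x ≠ 1 := by
      intro h; rw [h, orderOf_one] at hx; exact hp.one_lt.ne' hx.symm
    have hKlt : K < ⊤ := by
      rw [lt_top_iff_ne_top]
      intro h
      have : (x, (1 : Y)) ∈ K := h ▸ Subgroup.mem_top _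
      rw [MonoidHom.mem_ker] at this
      exact hx1 this
    have hchief : ∀ M : Subgroup (X × Y), M.Normal → K ≤ M → M ≤ ⊤ → M = K ∨ M = ⊤ := by
      intro M hM hKM _
      have hMn : (M.map f).Normal := Subgroup.Normal.map hM f hfsurj
      rcases hsimple.eq_bot_or_eq_top_of_normal (M.map f) hMn with hb | ht
      · left
        refine le_antisymm (fun m hm => ?_) hKM
        have : f m ∈ M.map f := ⟨m, hm, rfl⟩
        rw [hb, Subgroup.mem_bot] at this
        exact this
      · right
        rw [eq_top_iff]
        rintro ⟨a, b⟩ _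
        have ha : a ∈ M.map f := ht ▸ Subgroup.mem_top a
        obtain ⟨⟨a', c⟩, hmem, hfst⟩ := ha
        have hone : ((1 : X), c⁻¹ * b) ∈ K := by rw [MonoidHom.mem_ker]; rfl
        have h2 := M.mul_mem hmem (hKM hone)
        have h3 : ((a', c) : X × Y) * (1, c⁻¹ * b) = (a, b) := by
          simp only [Prod.mk_mul_mk, mul_one, mul_inv_cancel_left]
          exact Prod.ext hfst rfl
        rwa [h3] at h2
    set g : (X × Y) ⧸ K := QuotientGroup.mk' K (x, y) with hg
    set e : ((X × Y) ⧸ K) ≃* X := QuotientGroup.quotientKerEquivOfSurjective f hfsurj with he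
    have heg : e g = x := rfl
    have hmap : (Subgroup.zpowers ((x, y) : X × Y)).map (QuotientGroup.mk' K)
        = Subgroup.zpowers g := MonoidHom.map_zpowers _ _
    have htop : (⊤ : Subgroup (X × Y)).map (QuotientGroup.mk' K) = ⊤ :=
      Subgroup.map_top_of_surjective _ (QuotientGroup.mk'_surjective K)
    have hgne : g ≠ 1 := by
      intro h
      apply hx1
      rw [← heg, h, map_one]
    have hgp : g ^ p = 1 := by
      have : ((x, y) : X × Y) ^ p = 1 :=
        Prod.ext (by simp [← hx, pow_orderOf_eq_one]) (by simp [← hy, pow_orderOf_eq_one])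
      rw [hg, ← map_pow, this, map_one]
    have hog : orderOf g = p := by
      have hdv : orderOf g ∣ p := orderOf_dvd_of_pow_eq_one hgp
      rcases (Nat.Prime.eq_one_or_self_of_dvd hp _ hdv) with h | h
      · exact absurd (orderOf_eq_one_iff.mp h) hgne
      · exact h
    have hmapz : (Subgroup.zpowers g).map e.toMonoidHom = Subgroup.zpowers x := by
      rw [MonoidHom.map_zpowers]; exact congrArg _ heg
    have hnorm : (Subgroup.normalizer (Subgroup.zpowers g : Set ((X × Y) ⧸ K))).map e.toMonoidHom
        = Subgroup.normalizer (Subgroup.zpowers x : Set X) := by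
      rw [Subgroup.map_normalizer_eq_of_bijective (Subgroup.zpowers g) (f := e.toMonoidHom)
        e.bijective, hmapz]
    have hidx : (Subgroup.normalizer (Subgroup.zpowers g : Set ((X × Y) ⧸ K))).index
        = (Subgroup.normalizer (Subgroup.zpowers x : Set X)).index := by
      rw [← hnorm, Subgroup.index_map_of_injective _ (f := e.toMonoidHom) e.injective,
        MonoidHom.range_eq_top_of_surjective e.toMonoidHom e.surjective,
        Subgroup.index_top, mul_one]
    obtain ⟨q, hqp, hqne, hqdvd⟩ :=
      exists_prime_ne_dvd_index_normalizer p hp hsimple hna hSyl x hx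
    have hfin := hPi K ⊤ hKn inferInstance hKlt hchief q hqp ?_
    · rw [hmap, htop, inf_top_eq, Nat.card_zpowers, hog] at hfin
      exact hqne ((Nat.prime_dvd_prime_iff_eq hqp hp).mp hfin)
    · rw [hmap, htop, inf_top_eq, hidx]
      exact hqdvd
end

section
/- Let G be a finite group with p dividing |G|. Then every p-subgroup L of the p-supersoluble hypercenter Z_{p𝔘}(G) satisfies the Π-property in G; consequently every p-subgroup of Z_{p𝔘}(G) satisfies the IC-Π-property in G. -/
/-- The supersoluble hypercenter `Z_𝔘(G)`: the product of all normal subgroups `H` of `G`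
such that every chief factor of `G` below `H` is cyclic. -/
def supersolubleHypercenter (G : Type*) [Group G] : Subgroup G :=
  ⨆ H ∈ {H : Subgroup G | H.Normal ∧
      ∀ (K L : Subgroup G) (hK : K.Normal), L.Normal → K < L → L ≤ H →
        (∀ M : Subgroup G, M.Normal → K ≤ M → M ≤ L → M = K ∨ M = L) →
        haveI := hK
        IsCyclic ↥(L.map (QuotientGroup.mk' K))}, H

/-- The `p`-supersoluble hypercenter `Z_{p𝔘}(G)`: the product of all normal subgroups `H` of `G`
such that every `p`-chief factor of `G` below `H` is cyclic of order `p`. -/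
def pSupersolubleHypercenter (p : ℕ) (G : Type*) [Group G] : Subgroup G :=
  ⨆ H ∈ {H : Subgroup G | H.Normal ∧
      ∀ K L : Subgroup G, K.Normal → L.Normal → K < L → L ≤ H →
        (∀ M : Subgroup G, M.Normal → K ≤ M → M ≤ L → M = K ∨ M = L) →
        p ∣ K.relIndex L → K.relIndex L = p}, H


section Aux

open scoped Pointwise

variable {G : Type*} [Group G]

/-- Dedekind modular law, version with `K ≤ A`, `K` normal. -/
lemma aux_ded1 {A H K : Subgroup G} [K.Normal] (hKA : K ≤ A) :
    A ⊓ (H ⊔ K) = (A ⊓ H) ⊔ K := by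
  refine le_antisymm ?_ (sup_le (le_inf inf_le_left (inf_le_right.trans le_sup_left))
    (le_inf hKA le_sup_right))
  intro x hx
  obtain ⟨hxA, hxHK⟩ := Subgroup.mem_inf.mp hx
  have hx2 : x ∈ ((H : Set G) * (K : Set G)) := by
    have : x ∈ ((H ⊔ K : Subgroup G) : Set G) := hxHK
    rwa [Subgroup.mul_normal] at this
  obtain ⟨h, hh, k, hk, rfl⟩ := hx2
  have hhA : h ∈ A := by
    have : (h * k) * k⁻¹ ∈ A := A.mul_mem hxA (A.inv_mem (hKA hk))
    simpa using this
  exact Subgroup.mul_mem _ (Subgroup.mem_sup_left ⟨hhA, hh⟩) (Subgroup.mem_sup_right hk)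

/-- Dedekind modular law, version with `M ≤ H`, `K` normal. -/
lemma aux_ded2 {H M K : Subgroup G} [K.Normal] (hMH : M ≤ H) :
    H ⊓ (M ⊔ K) = M ⊔ (H ⊓ K) := by
  refine le_antisymm ?_ (sup_le (le_inf hMH le_sup_left)
    (le_inf inf_le_left (inf_le_right.trans le_sup_right)))
  intro x hx
  obtain ⟨hxH, hxMK⟩ := Subgroup.mem_inf.mp hx
  have hx2 : x ∈ ((M : Set G) * (K : Set G)) := by
    have : x ∈ ((M ⊔ K : Subgroup G) : Set G) := hxMK
    rwa [Subgroup.mul_normal] at this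
  obtain ⟨m, hm, k, hk, rfl⟩ := hx2
  have hkH : k ∈ H := by
    have : m⁻¹ * (m * k) ∈ H := H.mul_mem (H.inv_mem (hMH hm)) hxH
    simpa using this
  exact Subgroup.mul_mem _ (Subgroup.mem_sup_left hm) (Subgroup.mem_sup_right ⟨hkH, hk⟩)

/-- The key predicate: every `p`-chief factor of `G` covered by `N` has order `p`. -/
def GoodPChief (p : ℕ) (N : Subgroup G) : Prop :=
  N.Normal ∧ ∀ K A : Subgroup G, K.Normal → A.Normal → K < A →
    (∀ M : Subgroup G, M.Normal → K ≤ M → M ≤ A → M = K ∨ M = A) →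
    A ≤ N ⊔ K → p ∣ K.relIndex A → K.relIndex A = p

lemma goodPChief_bot (p : ℕ) : GoodPChief p (⊥ : Subgroup G) := by
  refine ⟨inferInstance, fun K A _ _ hlt _ hle _ => ?_⟩
  rw [bot_sup_eq] at hle
  exact absurd hle hlt.not_ge

lemma goodPChief_of_mem {p : ℕ} {H : Subgroup G} (hHn : H.Normal)
    (hprop : ∀ K L : Subgroup G, K.Normal → L.Normal → K < L → L ≤ H →
      (∀ M : Subgroup G, M.Normal → K ≤ M → M ≤ L → M = K ∨ M = L) →
      p ∣ K.relIndex L → K.relIndex L = p) :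
    GoodPChief p H := by
  haveI := hHn
  refine ⟨hHn, fun K A hK hA hlt hchief hle hdvd => ?_⟩
  haveI := hK; haveI := hA
  have hAeq : A = (H ⊓ A) ⊔ K := by
    have h1 : A ⊓ (H ⊔ K) = (A ⊓ H) ⊔ K := aux_ded1 hlt.le
    rw [inf_eq_left.mpr hle, inf_comm A H] at h1
    exact h1
  have hKA₁ : K ⊓ (H ⊓ A) = H ⊓ K := by
    rw [inf_left_comm, inf_eq_left.mpr hlt.le]
  have hrel : K.relIndex A = (H ⊓ K).relIndex (H ⊓ A) := by
    conv_lhs => rw [hAeq]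
    rw [Subgroup.relIndex_sup_right, ← Subgroup.inf_relIndex_right K (H ⊓ A), hKA₁]
  have hlt₁ : H ⊓ K < H ⊓ A := by
    refine lt_of_le_of_ne (inf_le_inf_left H hlt.le) fun h => hlt.ne ?_
    rw [hAeq, ← h, sup_eq_right.mpr inf_le_right]
  have hchief₁ : ∀ M : Subgroup G, M.Normal → H ⊓ K ≤ M → M ≤ H ⊓ A →
      M = H ⊓ K ∨ M = H ⊓ A := by
    intro M hM h1 h2
    haveI := hM
    rcases hchief (M ⊔ K) inferInstance le_sup_right
        (sup_le (h2.trans inf_le_right) hlt.le) with h | h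
    · left
      exact le_antisymm (le_inf (h2.trans inf_le_left) (le_sup_left.trans h.le)) h1
        |>.symm |>.symm
    · right
      have e : H ⊓ A = M ⊔ (H ⊓ K) := by
        rw [← h, aux_ded2 (h2.trans inf_le_left)]
      rw [e, sup_eq_left.mpr h1]
  have := hprop (H ⊓ K) (H ⊓ A) inferInstance inferInstance hlt₁ inf_le_left hchief₁
    (hrel ▸ hdvd)
  rw [hrel]
  exact this

lemma goodPChief_sup {p : ℕ} {N₁ N₂ : Subgroup G}
    (h1 : GoodPChief p N₁) (h2 : GoodPChief p N₂) : GoodPChief p (N₁ ⊔ N₂) := by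
  obtain ⟨hn1, hg1⟩ := h1
  obtain ⟨hn2, hg2⟩ := h2
  haveI := hn1; haveI := hn2
  refine ⟨inferInstance, fun K A hK hA hlt hchief hle hdvd => ?_⟩
  haveI := hK; haveI := hA
  rcases hchief (A ⊓ (N₁ ⊔ K)) inferInstance (le_inf hlt.le le_sup_right)
      inf_le_left with hMK | hMA
  · -- `A ⊓ (N₁ ⊔ K) = K`; pass to the chief factor `(A ⊔ (N₁ ⊔ K)) / (N₁ ⊔ K)`.
    have hK'A : (N₁ ⊔ K) ⊓ A = K := by rw [inf_comm]; exact hMK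
    have hAnle : ¬ A ≤ N₁ ⊔ K := by
      intro h
      exact hlt.ne (hMK.symm.trans (inf_eq_left.mpr h))
    have hlt' : N₁ ⊔ K < A ⊔ (N₁ ⊔ K) :=
      lt_of_le_of_ne le_sup_right fun h => hAnle (le_sup_left.trans h.symm.le)
    have hrel' : (N₁ ⊔ K).relIndex (A ⊔ (N₁ ⊔ K)) = K.relIndex A := by
      rw [Subgroup.relIndex_sup_right, ← Subgroup.inf_relIndex_right (N₁ ⊔ K) A, hK'A]
    have hchief' : ∀ M : Subgroup G, M.Normal → N₁ ⊔ K ≤ M → M ≤ A ⊔ (N₁ ⊔ K) →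
        M = N₁ ⊔ K ∨ M = A ⊔ (N₁ ⊔ K) := by
      intro M hM hm1 hm2
      haveI := hM
      rcases hchief (A ⊓ M) inferInstance
          (le_inf hlt.le (le_sup_right.trans hm1)) inf_le_left with h | h
      · left
        have e1 : M = (M ⊓ A) ⊔ (N₁ ⊔ K) := by
          rw [← aux_ded1 (A := M) (H := A) (K := N₁ ⊔ K) hm1, inf_eq_left.mpr hm2]
        rw [e1, inf_comm M A, h, sup_eq_right.mpr le_sup_right]
      · right
        exact le_antisymm hm2 (sup_le (inf_eq_left.mp h) hm1)
    have hle' : A ⊔ (N₁ ⊔ K) ≤ N₂ ⊔ (N₁ ⊔ K) := by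
      refine sup_le (hle.trans (sup_le (sup_le ?_ le_sup_left) ?_)) le_sup_right
      · exact le_sup_left.trans le_sup_right
      · exact le_sup_right.trans le_sup_right
    rw [← hrel']
    exact hg2 (N₁ ⊔ K) (A ⊔ (N₁ ⊔ K)) inferInstance inferInstance hlt' hchief' hle'
      (hrel'.symm ▸ hdvd)
  · exact hg1 K A hK hA hlt hchief (inf_eq_left.mp hMA) hdvd

lemma goodPChief_hypercenter [Finite G] (p : ℕ) :
    GoodPChief p (pSupersolubleHypercenter p G) := by
  haveI : Finite (Subgroup G) := Finite.of_injective _ SetLike.coe_injective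
  set S : Set (Subgroup G) := {H : Subgroup G | H.Normal ∧
      ∀ K L : Subgroup G, K.Normal → L.Normal → K < L → L ≤ H →
        (∀ M : Subgroup G, M.Normal → K ≤ M → M ≤ L → M = K ∨ M = L) →
        p ∣ K.relIndex L → K.relIndex L = p} with hSdef
  have hfin : S.Finite := Set.toFinite S
  have hrepr : pSupersolubleHypercenter p G = hfin.toFinset.sup id := by
    rw [Finset.sup_id_eq_sSup, hfin.coe_toFinset, sSup_eq_iSup]
    rfl
  rw [hrepr]
  refine Finset.sup_induction (goodPChief_bot p) (fun a ha b hb => goodPChief_sup ha hb) ?_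
  intro H hH
  rw [hfin.mem_toFinset] at hH
  exact goodPChief_of_mem hH.1 hH.2

lemma piProperty_of_pGroup_le {G : Type*} [Group G] [Finite G] (p : ℕ)
    (hp : p.Prime) (H : Subgroup G) (hH : IsPGroup p H)
    (hHZ : H ≤ pSupersolubleHypercenter p G) : SatisfiesPiProperty H := by
  intro K A hK hA hlt hchief q hq hqdvd
  haveI := hK; haveI := hA
  haveI : Fact p.Prime := ⟨hp⟩
  obtain ⟨hZn, hZ⟩ := goodPChief_hypercenter (G := G) p
  haveI := hZn
  suffices hnorm : (H.map (QuotientGroup.mk' K) ⊓ A.map (QuotientGroup.mk' K)).Normal by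
    rw [Subgroup.normalizer_eq_top_iff.mpr hnorm, Subgroup.index_top] at hqdvd
    exact absurd (Nat.le_of_dvd one_pos hqdvd) hq.one_lt.not_ge
  have hIA : H.map (QuotientGroup.mk' K) ⊓ A.map (QuotientGroup.mk' K) ≤
      A.map (QuotientGroup.mk' K) := inf_le_right
  have hpI : IsPGroup p ↥(H.map (QuotientGroup.mk' K) ⊓ A.map (QuotientGroup.mk' K)) :=
    (hH.map _).to_inf_left
  have cardA : Nat.card ↥(A.map (QuotientGroup.mk' K)) = K.relIndex A := by
    rw [← Subgroup.relIndex_ker, QuotientGroup.ker_mk']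
  have hbotnormal : (⊥ : Subgroup (G ⧸ K)).Normal := inferInstance
  by_cases hpd : p ∣ K.relIndex A
  · rcases hchief (A ⊓ (pSupersolubleHypercenter p G ⊔ K)) inferInstance
        (le_inf hlt.le le_sup_right) inf_le_left with hMK | hMA
    · -- intersection with hypercenter is trivial mod `K`, so the subgroup is trivial
      have hIbot : H.map (QuotientGroup.mk' K) ⊓ A.map (QuotientGroup.mk' K) = ⊥ := by
        rw [eq_bot_iff]
        intro x hx
        obtain ⟨hx1, hx2⟩ := Subgroup.mem_inf.mp hx
        obtain ⟨h, hh, hhx⟩ := hx1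
        obtain ⟨a, ha, hax⟩ := hx2
        have heq : QuotientGroup.mk' K h = QuotientGroup.mk' K a := by rw [hhx, hax]
        obtain ⟨z, hz, hza⟩ := (QuotientGroup.mk'_eq_mk' (N := K)).mp heq
        have haHK : a ∈ H ⊔ K := by
          rw [← hza]
          exact Subgroup.mul_mem _ (Subgroup.mem_sup_left hh) (Subgroup.mem_sup_right hz)
        have haK : a ∈ K := by
          have hmem : a ∈ A ⊓ (pSupersolubleHypercenter p G ⊔ K) :=
            ⟨ha, (sup_le (hHZ.trans le_sup_left) le_sup_right :
              H ⊔ K ≤ pSupersolubleHypercenter p G ⊔ K) haHK⟩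
          exact hMK ▸ hmem
        rw [← hax]
        exact Subgroup.mem_bot.mpr ((QuotientGroup.eq_one_iff a).mpr haK)
      rw [hIbot]
      exact hbotnormal
    · -- the chief factor lies below the hypercenter mod `K`, so it has order `p`
      have hAZ : A ≤ pSupersolubleHypercenter p G ⊔ K := inf_eq_left.mp hMA
      have hrel : K.relIndex A = p := hZ K A hK hA hlt hchief hAZ hpd
      have hcard : Nat.card ↥(A.map (QuotientGroup.mk' K)) = p := cardA.trans hrel
      have hdvd : Nat.card ↥(H.map (QuotientGroup.mk' K) ⊓ A.map (QuotientGroup.mk' K)) ∣ p :=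
        hcard ▸ Subgroup.card_dvd_of_le hIA
      rcases hp.eq_one_or_self_of_dvd _ hdvd with h1 | hpc
      · rw [Subgroup.card_eq_one.mp h1]
        exact hbotnormal
      · have hIeq : H.map (QuotientGroup.mk' K) ⊓ A.map (QuotientGroup.mk' K) =
            A.map (QuotientGroup.mk' K) := by
          have hsub : ((H.map (QuotientGroup.mk' K) ⊓ A.map (QuotientGroup.mk' K) :
              Subgroup (G ⧸ K)) : Set (G ⧸ K)) ⊆
              ((A.map (QuotientGroup.mk' K) : Subgroup (G ⧸ K)) : Set (G ⧸ K)) := hIA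
          refine SetLike.coe_injective (Set.eq_of_subset_of_ncard_le hsub ?_ (Set.toFinite _))
          rw [← Nat.card_coe_set_eq, ← Nat.card_coe_set_eq]
          simp only [SetLike.coe_sort_coe]
          rw [hcard, hpc]
        rw [hIeq]
        exact hA.map _ (QuotientGroup.mk'_surjective K)
  · -- `p` does not divide the order of the chief factor: the intersection is trivial
    obtain ⟨k, hk⟩ := IsPGroup.iff_card.mp hpI
    have hdvdA : Nat.card ↥(H.map (QuotientGroup.mk' K) ⊓ A.map (QuotientGroup.mk' K)) ∣
        K.relIndex A := cardA ▸ Subgroup.card_dvd_of_le hIA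
    rcases k with _ | k
    · have h1 : Nat.card ↥(H.map (QuotientGroup.mk' K) ⊓ A.map (QuotientGroup.mk' K)) = 1 := by
        simpa using hk
      rw [Subgroup.card_eq_one.mp h1]
      exact hbotnormal
    · exact absurd ((hk ▸ dvd_pow_self p k.succ_ne_zero).trans hdvdA) hpd

end Aux

/-- If `p` divides `|G|`, then every `p`-subgroup of `Z_{p𝔘}(G)` satisfies the Π-property,
and hence the `IC`-Π-property, in `G`. -/
theorem piProperty_of_le_pSupersolubleHypercenter {G : Type*} [Group G] [Finite G] (p : ℕ)
    (hp : p.Prime) (hpG : p ∣ Nat.card G) (L : Subgroup G) (hL : IsPGroup p L)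
    (hLZ : L ≤ pSupersolubleHypercenter p G) :
    SatisfiesPiProperty L ∧ SatisfiesICPiProperty L := by
  constructor
  · exact piProperty_of_pGroup_le p hp L hL hLZ
  · exact piProperty_of_pGroup_le p hp _ hL.to_inf_left (inf_le_left.trans hLZ)
end
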